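/- A vertex colouring φ : V(G) → {1,…,k} of a graph G is an ℓ-vertex-ranking of G if and only if for every path v₀,v₁,…,v_r in G with 1 ≤ r ≤ ℓ edges, either φ(v₀) ≠ φ(v_r) or max{φ(v₁),…,φ(v_{r−1})} > φ(v₀). -/

import Mathlib

/-- `φ` is an `ℓ`-vertex-ranking of `G`. -/
def IsVertexRanking {V : Type*} (G : SimpleGraph V) (ℓ : ℕ) (φ : V → ℕ) : Prop :=
  ∀ H : G.Subgraph, H.Connected → (∀ u v : H.verts, H.coe.dist u v ≤ ℓ) →
    ∃ v ∈ H.verts, ∀ w ∈ H.verts, w ≠ v → φ w < φ v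

/-- The `ℓ`-vertex-ranking number of `G`. -/
noncomputable def rankingNumber {V : Type*} (G : SimpleGraph V) (ℓ : ℕ) : ℕ :=
  sInf {k | ∃ φ : V → ℕ, (∀ v, 1 ≤ φ v ∧ φ v ≤ k) ∧ IsVertexRanking G ℓ φ}

/-- `G` is `d`-degenerate. -/
def IsDegenerate {V : Type*} (G : SimpleGraph V) (d : ℕ) : Prop :=
  ∀ s : Set V, s.Nonempty →
    ∃ v ∈ s, (s ∩ G.neighborSet v).Finite ∧ (s ∩ G.neighborSet v).ncard ≤ d

/-- `G` has maximum degree at most `Δ`. -/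
def MaxDegreeLE {V : Type*} (G : SimpleGraph V) (Δ : ℕ) : Prop :=
  ∀ v, (G.neighborSet v).Finite ∧ (G.neighborSet v).ncard ≤ Δ

/-- A walk whose `toSubgraph` lies in `H` lifts to a walk in `H.coe` of the same length. -/
lemma walk_lift {V : Type*} {G : SimpleGraph V} {H : G.Subgraph} :
    ∀ {a b : V} (q : G.Walk a b), q.toSubgraph ≤ H → ∀ (ha : a ∈ H.verts) (hb : b ∈ H.verts),
      ∃ w : H.coe.Walk ⟨a, ha⟩ ⟨b, hb⟩, w.length = q.length := by
  intro a b q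
  induction q with
  | nil => exact fun _ _ _ => ⟨SimpleGraph.Walk.nil, rfl⟩
  | @cons a c b h q ih =>
    intro hq ha hb
    rw [SimpleGraph.Walk.toSubgraph, sup_le_iff] at hq
    have hadj : H.Adj a c := hq.1.2 (by simp)
    have hc : c ∈ H.verts := hadj.snd_mem
    obtain ⟨w, hw⟩ := ih hq.2 hc hb
    exact ⟨SimpleGraph.Walk.cons (by exact hadj) w, congrArg (· + 1) hw⟩

/-- Between any two vertices of the subgraph of a walk `p` there is a walk inside
`p.toSubgraph` of length at most `p.length`. -/
lemma exists_short_walk {V : Type*} {G : SimpleGraph V} {u v : V} (p : G.Walk u v)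
    {a b : V} (ha : a ∈ p.support) (hb : b ∈ p.support) :
    ∃ q : G.Walk a b, q.toSubgraph ≤ p.toSubgraph ∧ q.length ≤ p.length := by
  classical
  have hspec := p.take_spec ha
  have hb' : b ∈ (p.takeUntil a ha).support ∨ b ∈ (p.dropUntil a ha).support := by
    rw [← hspec] at hb
    rw [SimpleGraph.Walk.mem_support_append_iff] at hb
    exact hb
  have hsub1 : (p.takeUntil a ha).toSubgraph ≤ p.toSubgraph := by
    conv_rhs => rw [← hspec]
    rw [SimpleGraph.Walk.toSubgraph_append]
    exact le_sup_left
  have hsub2 : (p.dropUntil a ha).toSubgraph ≤ p.toSubgraph := by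
    conv_rhs => rw [← hspec]
    rw [SimpleGraph.Walk.toSubgraph_append]
    exact le_sup_right
  rcases hb' with hb1 | hb2
  · refine ⟨((p.takeUntil a ha).dropUntil b hb1).reverse, ?_, ?_⟩
    · rw [SimpleGraph.Walk.toSubgraph_reverse]
      refine le_trans ?_ hsub1
      conv_rhs => rw [← (p.takeUntil a ha).take_spec hb1]
      rw [SimpleGraph.Walk.toSubgraph_append]
      exact le_sup_right
    · rw [SimpleGraph.Walk.length_reverse]
      exact le_trans (SimpleGraph.Walk.length_dropUntil_le _ hb1)
        (SimpleGraph.Walk.length_takeUntil_le _ ha)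
  · refine ⟨(p.dropUntil a ha).takeUntil b hb2, ?_, ?_⟩
    · refine le_trans ?_ hsub2
      conv_rhs => rw [← (p.dropUntil a ha).take_spec hb2]
      rw [SimpleGraph.Walk.toSubgraph_append]
      exact le_sup_left
    · exact le_trans (SimpleGraph.Walk.length_takeUntil_le _ hb2)
        (SimpleGraph.Walk.length_dropUntil_le _ ha)

/-- A colouring φ : V(G) → {1,…,k} is an ℓ-vertex-ranking of G iff for every path
v₀,…,v_r in G with 1 ≤ r ≤ ℓ edges, either φ(v₀) ≠ φ(v_r) or some internal vertex u of the
path has φ(u) > φ(v₀). -/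
theorem stmt5 {V : Type*} (G : SimpleGraph V) (ℓ k : ℕ) (φ : V → ℕ)
    (hφ : ∀ v, 1 ≤ φ v ∧ φ v ≤ k) :
    IsVertexRanking G ℓ φ ↔
      ∀ (v w : V) (p : G.Walk v w), p.IsPath → 1 ≤ p.length → p.length ≤ ℓ →
        (φ v ≠ φ w ∨ ∃ u ∈ p.support, u ≠ v ∧ u ≠ w ∧ φ v < φ u) := by
  constructor
  · -- forward
    intro hr v w p hp hlen1 hlen2
    have hvw : v ≠ w := by
      rintro rfl
      rw [SimpleGraph.Walk.isPath_iff_eq_nil] at hp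
      simp [hp] at hlen1
    have hdiam : ∀ x y : p.toSubgraph.verts, p.toSubgraph.coe.dist x y ≤ ℓ := by
      rintro ⟨a, ha⟩ ⟨b, hb⟩
      rw [SimpleGraph.Walk.mem_verts_toSubgraph] at ha hb
      obtain ⟨q, hq1, hq2⟩ := exists_short_walk p ha hb
      obtain ⟨wq, hwq⟩ := walk_lift q hq1
        ((SimpleGraph.Walk.mem_verts_toSubgraph p).2 ha)
        ((SimpleGraph.Walk.mem_verts_toSubgraph p).2 hb)
      exact le_trans (le_trans (SimpleGraph.dist_le wq) (by rw [hwq]; exact hq2)) hlen2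
    obtain ⟨m, hm, hmax⟩ := hr p.toSubgraph p.toSubgraph_connected hdiam
    have hv : v ∈ p.toSubgraph.verts := p.start_mem_verts_toSubgraph
    have hw : w ∈ p.toSubgraph.verts := p.end_mem_verts_toSubgraph
    by_cases hmv : m = v
    · subst hmv
      exact Or.inl (hmax w hw (Ne.symm hvw)).ne'
    · by_cases hmw : m = w
      · subst hmw
        exact Or.inl (ne_of_lt (hmax v hv hvw))
      · exact Or.inr ⟨m, (SimpleGraph.Walk.mem_verts_toSubgraph p).1 hm, hmv, hmw,
          hmax v hv (fun h => hmv h.symm)⟩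
  · -- backward
    intro hpath H hconn hdiam
    have hne : H.verts.Nonempty := hconn.nonempty
    set S : Set ℕ := φ '' H.verts with hS
    have hSne : S.Nonempty := hne.image φ
    have hSbdd : BddAbove S := ⟨k, by rintro n ⟨x, _, rfl⟩; exact (hφ x).2⟩
    have hc : sSup S ∈ S := Nat.sSup_mem hSne hSbdd
    obtain ⟨v₀, hv₀, hcv₀⟩ := hc
    refine ⟨v₀, hv₀, fun w hw hwv => ?_⟩
    have hle : φ w ≤ φ v₀ := hcv₀ ▸ le_csSup hSbdd ⟨w, hw, rfl⟩
    rcases lt_or_eq_of_le hle with h | h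
    · exact h
    · exfalso
      -- two distinct vertices of maximum colour; find a shortest path between them
      have hreach : H.coe.Reachable ⟨w, hw⟩ ⟨v₀, hv₀⟩ := hconn.coe ⟨w, hw⟩ ⟨v₀, hv₀⟩
      obtain ⟨q, hqpath, hqlen⟩ := hreach.exists_path_of_dist
      have hq1 : 1 ≤ q.length := by
        rcases Nat.eq_zero_or_pos q.length with h0 | h0
        · exact absurd (congrArg Subtype.val (SimpleGraph.Walk.eq_of_length_eq_zero h0)) hwv
        · exact h0
      have hq2 : q.length ≤ ℓ := hqlen ▸ hdiam ⟨w, hw⟩ ⟨v₀, hv₀⟩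
      have hinj : Function.Injective H.hom := Subtype.val_injective
      have hmpath : (q.map H.hom).IsPath := SimpleGraph.Walk.map_isPath_of_injective hinj hqpath
      have := hpath w v₀ (q.map H.hom) hmpath (hq1.trans_eq (SimpleGraph.Walk.length_map H.hom q).symm)
        ((SimpleGraph.Walk.length_map H.hom q).trans_le hq2)
      rcases this with hne' | ⟨u, hu, _, _, hlt⟩
      · exact hne' h
      · replace hu : u ∈ q.support.map H.hom := by
          rw [← SimpleGraph.Walk.support_map]; exact hu
        rw [List.mem_map] at hu
        obtain ⟨x, _, rfl⟩ := hu
        have : φ (H.hom x) ≤ φ v₀ := hcv₀ ▸ le_csSup hSbdd ⟨H.hom x, x.2, rfl⟩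
        exact absurd hlt (not_lt.2 (h ▸ this))
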